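/- For every n ≥ 0 there exists a finite simple graph with n vertices that has at least (1/2) · √(n+1) · 2^(n/2) cliques and at least (1/2) · √(n+1) · 2^(n/2) cocliques. -/

import Mathlib

/-- Key numeric reduction: a squared integer inequality implies the real bound. -/
lemma aux_sqrt_bound (n : ℕ) (x : ℝ) (hx : 0 ≤ x)
    (h : ((n + 1 : ℕ) * 2 ^ n : ℝ) ≤ (2 * x) ^ 2) :
    (1 / 2 : ℝ) * Real.sqrt (n + 1) * 2 ^ ((n : ℝ) / 2) ≤ x := by
  have hsq : Real.sqrt (((n : ℝ) + 1) * 2 ^ (n : ℕ)) ≤ 2 * x := by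
    have h' : ((n : ℝ) + 1) * 2 ^ (n : ℕ) ≤ (2 * x) ^ 2 := by push_cast at h; linarith
    have := Real.sqrt_le_sqrt h'
    rwa [Real.sqrt_sq (by linarith)] at this
  have e1 : Real.sqrt (((n : ℝ) + 1) * 2 ^ (n : ℕ))
      = Real.sqrt ((n : ℝ) + 1) * 2 ^ ((n : ℝ) / 2) := by
    rw [Real.sqrt_mul (by positivity)]
    congr 1
    rw [← Real.rpow_natCast 2 n, Real.sqrt_eq_rpow, ← Real.rpow_mul (by norm_num)]
    congr 1
    ring
  rw [e1] at hsq
  linarith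

lemma aux_np1_le (n : ℕ) : n + 1 ≤ 2 ^ (n + 2) := by
  have : n < 2 ^ n := Nat.lt_two_pow_self
  have h2 : 2 ^ n ≤ 2 ^ (n + 2) := Nat.pow_le_pow_right (by norm_num) (by omega)
  omega

/-- For every `n ≥ 0` there is a graph with `n` vertices having at least
`(1/2) · √(n+1) · 2^(n/2)` cliques and at least that many cocliques. -/
theorem exists_graph_many_cliques_cocliques (n : ℕ) :
    ∃ G : SimpleGraph (Fin n),
      (1 / 2 : ℝ) * Real.sqrt (n + 1) * 2 ^ ((n : ℝ) / 2)
          ≤ ({X : Set (Fin n) | G.IsClique X}.ncard : ℝ) ∧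
      (1 / 2 : ℝ) * Real.sqrt (n + 1) * 2 ^ ((n : ℝ) / 2)
          ≤ ({Y : Set (Fin n) | Y.Pairwise fun u v => ¬ G.Adj u v}.ncard : ℝ) := by
  -- choose the minimal a with (n+1) * 2^n ≤ 2^(2a+2)
  have hwit : (n + 1) * 2 ^ n ≤ 2 ^ (2 * n + 2) := by
    calc (n + 1) * 2 ^ n ≤ 2 ^ (n + 2) * 2 ^ n := Nat.mul_le_mul_right _ (aux_np1_le n)
      _ = 2 ^ (2 * n + 2) := by rw [← pow_add]; ring_nf
  have hex : ∃ a : ℕ, (n + 1) * 2 ^ n ≤ 2 ^ (2 * a + 2) := ⟨n, hwit⟩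
  obtain ⟨a, hspec, hmin⟩ : ∃ a : ℕ, ((n + 1) * 2 ^ n ≤ 2 ^ (2 * a + 2)) ∧
      ∀ b < a, ¬ ((n + 1) * 2 ^ n ≤ 2 ^ (2 * b + 2)) :=
    ⟨Nat.find hex, Nat.find_spec hex, fun b hb => Nat.find_min hex hb⟩
  have han : a ≤ n := by
    by_contra h
    exact hmin n (by omega) hwit
  -- second numeric condition
  have hspec2 : (n + 1) * 2 ^ n * 2 ^ (2 * a) ≤ 4 * (a + 1) ^ 2 * 2 ^ (2 * n) := by
    rcases Nat.eq_zero_or_pos a with h0 | hpos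
    · subst h0
      calc (n + 1) * 2 ^ n * 2 ^ (2 * 0) = (n + 1) * 2 ^ n := by norm_num
        _ ≤ 2 ^ (n + 2) * 2 ^ n := Nat.mul_le_mul_right _ (aux_np1_le n)
        _ = 4 * 2 ^ (2 * n) := by rw [← pow_add]; rw [show n + 2 + n = 2 * n + 2 by ring, pow_add]; ring
        _ ≤ 4 * (0 + 1) ^ 2 * 2 ^ (2 * n) := by norm_num
    · -- minimality at a - 1
      have hmin' := hmin (a - 1) (by omega)
      have hlt : 2 ^ (2 * a) < (n + 1) * 2 ^ n := by
        have he : 2 * (a - 1) + 2 = 2 * a := by omega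
        rw [he] at hmin'
        omega
      -- n ≥ 1 since a ≥ 1
      have hn1 : 1 ≤ n := by
        by_contra hn
        have hn0 : n = 0 := by omega
        subst hn0
        exact hmin 0 hpos (by norm_num)
      -- n + 1 ≤ 2(a+1)
      have h2a : n + 1 ≤ 2 * (a + 1) := by
        have hle : 2 ^ (n + 1) ≤ 2 ^ (2 * a + 2) := by
          calc 2 ^ (n + 1) = 2 * 2 ^ n := by ring
            _ ≤ (n + 1) * 2 ^ n := Nat.mul_le_mul_right _ (by omega)
            _ ≤ 2 ^ (2 * a + 2) := hspec
        have := (Nat.pow_le_pow_iff_right (by norm_num : 1 < 2)).mp hle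
        omega
      calc (n + 1) * 2 ^ n * 2 ^ (2 * a)
          ≤ (n + 1) * 2 ^ n * ((n + 1) * 2 ^ n) := Nat.mul_le_mul_left _ (le_of_lt hlt)
        _ = (n + 1) ^ 2 * (2 ^ n * 2 ^ n) := by ring
        _ ≤ (2 * (a + 1)) ^ 2 * (2 ^ n * 2 ^ n) := Nat.mul_le_mul_right _ (Nat.pow_le_pow_left h2a 2)
        _ = 4 * (a + 1) ^ 2 * 2 ^ (2 * n) := by rw [← pow_add]; ring_nf
  -- the graph: clique on the first a vertices, rest isolated
  refine ⟨⟨fun u v => u ≠ v ∧ (u : ℕ) < a ∧ (v : ℕ) < a,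
      ⟨fun u v ⟨h1, h2, h3⟩ => ⟨h1.symm, h3, h2⟩⟩,
      ⟨fun u ⟨h1, _⟩ => h1 rfl⟩⟩, ?_, ?_⟩
  · -- cliques: at least 2^a many
    set G : SimpleGraph (Fin n) := ⟨fun u v => u ≠ v ∧ (u : ℕ) < a ∧ (v : ℕ) < a,
      ⟨fun u v ⟨h1, h2, h3⟩ => ⟨h1.symm, h3, h2⟩⟩, ⟨fun u ⟨h1, _⟩ => h1 rfl⟩⟩ with hG
    have hcard : 2 ^ a ≤ {X : Set (Fin n) | G.IsClique X}.ncard := by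
      rw [← Nat.card_coe_set_eq]
      have key := Nat.card_le_card_of_injective
        (α := Finset (Fin a)) (β := {X : Set (Fin n) | G.IsClique X})
        (fun T => ⟨(Fin.castLE han) '' ↑T, by
          intro u hu v hv huv
          simp only [Set.mem_image, Finset.mem_coe] at hu hv
          obtain ⟨i, _, hi⟩ := hu
          obtain ⟨j, _, hj⟩ := hv
          exact ⟨huv, by rw [← hi]; exact i.isLt, by rw [← hj]; exact j.isLt⟩⟩)
        (by
          intro T S hTS
          replace hTS := congrArg Subtype.val hTS
          have := Set.image_injective.mpr (Fin.castLE_injective han) hTS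
          exact_mod_cast Finset.coe_injective this)
      simpa [Nat.card_eq_fintype_card, Fintype.card_finset] using key
    have hb := aux_sqrt_bound n ((2 ^ a : ℕ) : ℝ) (by positivity) (by
      have hn : (n + 1) * 2 ^ n ≤ (2 * 2 ^ a) ^ 2 := by
        calc (n + 1) * 2 ^ n ≤ 2 ^ (2 * a + 2) := hspec
          _ = (2 * 2 ^ a) ^ 2 := by rw [pow_add]; ring_nf
      exact_mod_cast hn)
    refine le_trans hb ?_
    exact_mod_cast Nat.cast_le.mpr hcard
  · -- cocliques: at least (a+1) * 2^(n-a) many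
    set G : SimpleGraph (Fin n) := ⟨fun u v => u ≠ v ∧ (u : ℕ) < a ∧ (v : ℕ) < a,
      ⟨fun u v ⟨h1, h2, h3⟩ => ⟨h1.symm, h3, h2⟩⟩, ⟨fun u ⟨h1, _⟩ => h1 rfl⟩⟩ with hG
    set S := {Y : Set (Fin n) | Y.Pairwise fun u v => ¬ G.Adj u v} with hS
    have hcard : (a + 1) * 2 ^ (n - a) ≤ S.ncard := by
      rw [← Nat.card_coe_set_eq]
      have key := Nat.card_le_card_of_injective
        (α := Fin (a + 1) × Finset (Fin (n - a))) (β := S)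
        (fun p => ⟨{v : Fin n | (v : ℕ) + 1 = (p.1 : ℕ) ∨ ∃ i ∈ p.2, (v : ℕ) = a + (i : ℕ)},
          by
            intro u hu v hv huv hadj
            obtain ⟨hne, hua, hva⟩ := hadj
            simp only [Set.mem_setOf_eq] at hu hv
            rcases hu with hu | ⟨i, _, hi⟩
            · rcases hv with hv | ⟨j, _, hj⟩
              · exact hne (Fin.ext (by omega))
              · omega
            · omega⟩)
        (by
          rintro ⟨x, T⟩ ⟨y, S'⟩ hps
          replace hps := congrArg Subtype.val hps
          simp only [Set.ext_iff, Set.mem_setOf_eq] at hps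
          have hxy : (x : ℕ) = (y : ℕ) := by
            have hx' : ∀ m : ℕ, m < a → ((m + 1 = (x : ℕ)) ↔ (m + 1 = (y : ℕ))) := by
              intro m hm
              have hv := hps ⟨m, by omega⟩
              simp only [Fin.val_mk] at hv
              constructor
              · intro h
                rcases hv.mp (Or.inl h) with h' | ⟨i, _, hi⟩
                · exact h'
                · omega
              · intro h
                rcases hv.mpr (Or.inl h) with h' | ⟨i, _, hi⟩
                · exact h'
                · omega
            rcases hxv : (x : ℕ) with _ | m
            · rcases hyv : (y : ℕ) with _ | k
              · rfl
              · have hk : k < a := by have := y.isLt; omega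
                have := (hx' k hk).mpr (by omega); omega
            · have hm : m < a := by have := x.isLt; omega
              have := (hx' m hm).mp (by omega); omega
          have hTS : T = S' := by
            ext i
            have hv := hps ⟨a + (i : ℕ), by have := i.isLt; omega⟩
            simp only [Fin.val_mk] at hv
            have hxa : (x : ℕ) ≤ a := by have := x.isLt; omega
            have hya : (y : ℕ) ≤ a := by have := y.isLt; omega
            constructor
            · intro hi
              rcases hv.mp (Or.inr ⟨i, hi, rfl⟩) with h' | ⟨j, hj, hj'⟩
              · omega
              · have : i = j := Fin.ext (by omega)
                rwa [this]
            · intro hi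
              rcases hv.mpr (Or.inr ⟨i, hi, rfl⟩) with h' | ⟨j, hj, hj'⟩
              · omega
              · have : i = j := Fin.ext (by omega)
                rwa [this]
          exact Prod.ext (Fin.ext hxy) hTS)
      simpa [Nat.card_eq_fintype_card, Fintype.card_finset] using key
    have hb := aux_sqrt_bound n (((a + 1) * 2 ^ (n - a) : ℕ) : ℝ) (by positivity) (by
      have hnat : (n + 1) * 2 ^ n * 2 ^ (2 * a) ≤ (2 * ((a + 1) * 2 ^ (n - a))) ^ 2 * 2 ^ (2 * a) := by
        calc (n + 1) * 2 ^ n * 2 ^ (2 * a) ≤ 4 * (a + 1) ^ 2 * 2 ^ (2 * n) := hspec2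
          _ = (2 * ((a + 1) * 2 ^ (n - a))) ^ 2 * 2 ^ (2 * a) := by
              have h1 : 2 ^ (2 * n) = 2 ^ (2 * (n - a)) * 2 ^ (2 * a) := by
                rw [← pow_add]; congr 1; omega
              have h2 : (2 ^ (n - a)) ^ 2 = 2 ^ (2 * (n - a)) := by
                rw [← pow_mul]; ring_nf
              rw [h1, ← h2]; ring
      have hnat' : (n + 1) * 2 ^ n ≤ (2 * ((a + 1) * 2 ^ (n - a))) ^ 2 :=
        Nat.le_of_mul_le_mul_right hnat (Nat.pow_pos (by norm_num))
      exact_mod_cast hnat')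
    refine le_trans hb ?_
    exact_mod_cast Nat.cast_le.mpr hcard
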